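/- Let λ̄ < 0, t₀ > 0 and 0 < ε < 1, and define φ : [0, t₀) → ℝ by φ(t) = (1 − ε)·exp[ (λ̄ t₀² / (1 − ε)) · ( 1/(t₀ − t) − 1/t₀ ) ] + ε. If |λ̄| t₀ / (1 − ε) > 6/(3 − √3), then for every t ∈ [0, t₀): −φ''(t)/φ(t) ≥ min{ 0, −(1/ε)·( 2λ̄/t₀ + λ̄²/(1 − ε) ) }. -/

import Mathlib

private lemma h_anti : AntitoneOn (fun x : ℝ => (x ^ 4 - 2 * x ^ 3) * Real.exp (-x))
    (Set.Ici (3 + Real.sqrt 3)) := by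
  have hderiv : ∀ x : ℝ, HasDerivAt (fun x : ℝ => (x ^ 4 - 2 * x ^ 3) * Real.exp (-x))
      ((4 * x ^ 3 - 2 * (3 * x ^ 2)) * Real.exp (-x) + (x ^ 4 - 2 * x ^ 3) * -Real.exp (-x)) x := by
    intro x
    have h4 : HasDerivAt (fun x : ℝ => x ^ 4) (4 * x ^ 3) x := by
      simpa using hasDerivAt_pow 4 x
    have h3 : HasDerivAt (fun x : ℝ => 2 * x ^ 3) (2 * (3 * x ^ 2)) x := by
      simpa using (hasDerivAt_pow 3 x).const_mul 2
    have h1 : HasDerivAt (fun x : ℝ => x ^ 4 - 2 * x ^ 3) (4 * x ^ 3 - 2 * (3 * x ^ 2)) x :=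
      h4.sub h3
    have h2 : HasDerivAt (fun x : ℝ => Real.exp (-x)) (-Real.exp (-x)) x := by
      simpa using (hasDerivAt_neg x).exp
    exact h1.mul h2
  apply antitoneOn_of_deriv_nonpos (convex_Ici _)
  · exact Continuous.continuousOn (by continuity)
  · intro x hx
    exact (hderiv x).differentiableAt.differentiableWithinAt
  · intro x hx
    rw [interior_Ici] at hx
    rw [(hderiv x).deriv]
    have hs3 : Real.sqrt 3 ^ 2 = 3 := Real.sq_sqrt (by norm_num)
    have hsn : (0:ℝ) ≤ Real.sqrt 3 := Real.sqrt_nonneg 3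
    have hexp : 0 < Real.exp (-x) := Real.exp_pos _
    have hxg : 3 + Real.sqrt 3 < x := hx
    have h3' : 3 ≤ (x - 3) ^ 2 := by nlinarith
    have h4 : 0 ≤ x ^ 2 * ((x - 3) ^ 2 - 3) := mul_nonneg (sq_nonneg x) (by linarith)
    nlinarith [mul_nonneg hexp.le h4]

set_option maxHeartbeats 1000000 in
/-- Lower bound for the radial curvatures `−φ''/φ` of the explicit
warping function: if `|λ̄|t₀/(1−ε) > 6/(3 − √3)` then for all `t ∈ [0, t₀)`,
`−φ''(t)/φ(t) ≥ min{0, −(1/ε)(2λ̄/t₀ + λ̄²/(1−ε))}`. -/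
theorem stmt_10 (lam t₀ ε : ℝ) (hlam : lam < 0) (ht₀ : 0 < t₀) (hε0 : 0 < ε) (hε1 : ε < 1)
    (φ : ℝ → ℝ)
    (hφ : ∀ t, φ t =
      (1 - ε) * Real.exp ((lam * t₀ ^ 2 / (1 - ε)) * (1 / (t₀ - t) - 1 / t₀)) + ε)
    (hbig : |lam| * t₀ / (1 - ε) > 6 / (3 - Real.sqrt 3)) :
    ∀ t ∈ Set.Ico 0 t₀,
      min 0 (-(1 / ε) * (2 * lam / t₀ + lam ^ 2 / (1 - ε))) ≤ -(deriv (deriv φ) t) / φ t := by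
  have h1ε : (0:ℝ) < 1 - ε := by linarith
  have hs3 : Real.sqrt 3 ^ 2 = 3 := Real.sq_sqrt (by norm_num)
  have hsn : (0:ℝ) ≤ Real.sqrt 3 := Real.sqrt_nonneg 3
  have hs3lt : Real.sqrt 3 < 3 := by nlinarith
  have h63 : 6 / (3 - Real.sqrt 3) = 3 + Real.sqrt 3 := by
    rw [div_eq_iff (by intro h; nlinarith : (3:ℝ) - Real.sqrt 3 ≠ 0)]
    linear_combination hs3
  rw [h63] at hbig
  simp only [one_div] at hφ
  obtain ⟨a, ha_def⟩ : ∃ a : ℝ, a = lam * t₀ ^ 2 / (1 - ε) := ⟨_, rfl⟩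
  rw [← ha_def] at hφ
  have ha : a < 0 := by
    rw [ha_def]
    exact div_neg_of_neg_of_pos (mul_neg_of_neg_of_pos hlam (by positivity)) h1ε
  have hane : a ≠ 0 := ne_of_lt ha
  have ht₀ne : t₀ ≠ 0 := ne_of_gt ht₀
  obtain ⟨X₀, hX₀⟩ : ∃ x : ℝ, x = -a / t₀ := ⟨_, rfl⟩
  have hX₀big : 3 + Real.sqrt 3 < X₀ := by
    have hq : X₀ = |lam| * t₀ / (1 - ε) := by
      rw [hX₀, ha_def, abs_of_neg hlam]
      field_simp
    rw [hq]
    exact hbig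
  intro t ht
  obtain ⟨ht0, htlt⟩ := ht
  have hstpos : 0 < t₀ - t := by linarith
  have hne : t₀ - t ≠ 0 := ne_of_gt hstpos
  -- first derivative of φ on Iio t₀
  have hd1 : ∀ s ∈ Set.Iio t₀, HasDerivAt φ
      ((1 - ε) * (Real.exp (a * ((t₀ - s)⁻¹ - t₀⁻¹)) * (a * ((t₀ - s) ^ 2)⁻¹))) s := by
    intro s hs
    have hslt : s < t₀ := hs
    have hnes : t₀ - s ≠ 0 := ne_of_gt (by linarith)
    have h0 : HasDerivAt (fun u : ℝ => t₀ - u) (-1) s := (hasDerivAt_id s).const_sub t₀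
    have h1 : HasDerivAt (fun u : ℝ => a * ((t₀ - u)⁻¹ - t₀⁻¹)) (a * (-(-1) / (t₀ - s) ^ 2)) s :=
      ((h0.inv hnes).sub_const t₀⁻¹).const_mul a
    have h2 := (h1.exp.const_mul (1 - ε)).add_const ε
    have hfun : φ = fun u => (1 - ε) * Real.exp (a * ((t₀ - u)⁻¹ - t₀⁻¹)) + ε := funext hφ
    rw [hfun]
    convert h2 using 1
    all_goals first | rfl | ring
  have hev : deriv φ =ᶠ[nhds t]
      fun s => (1 - ε) * (Real.exp (a * ((t₀ - s)⁻¹ - t₀⁻¹)) * (a * ((t₀ - s) ^ 2)⁻¹)) := by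
    filter_upwards [Iio_mem_nhds htlt] with s hs
    exact (hd1 s hs).deriv
  -- second derivative at t
  have h0 : HasDerivAt (fun u : ℝ => t₀ - u) (-1) t := (hasDerivAt_id t).const_sub t₀
  have h1 : HasDerivAt (fun u : ℝ => a * ((t₀ - u)⁻¹ - t₀⁻¹)) (a * (-(-1) / (t₀ - t) ^ 2)) t :=
    ((h0.inv hne).sub_const t₀⁻¹).const_mul a
  have hsqne : (t₀ - t) ^ 2 ≠ 0 := pow_ne_zero 2 hne
  have hG := ((h0.pow 2).inv hsqne).const_mul a
  have hd2 := (h1.exp.mul hG).const_mul (1 - ε)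
  have h2nd := hev.deriv_eq.trans hd2.deriv
  obtain ⟨X, hX⟩ : ∃ x : ℝ, x = -a / (t₀ - t) := ⟨_, rfl⟩
  have hXX₀ : X₀ ≤ X := by
    rw [hX, hX₀, neg_div, neg_div, neg_le_neg_iff, div_le_div_iff₀ hstpos ht₀]
    nlinarith
  have hEsplit : Real.exp (a * ((t₀ - t)⁻¹ - t₀⁻¹)) = Real.exp X₀ * Real.exp (-X) := by
    rw [← Real.exp_add]
    congr 1
    rw [hX, hX₀]
    field_simp
    ring
  have hkey : deriv (deriv φ) t
      = ((1 - ε) * Real.exp X₀ / a ^ 2) * ((X ^ 4 - 2 * X ^ 3) * Real.exp (-X)) := by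
    rw [h2nd, hEsplit]
    generalize Real.exp X₀ = P
    generalize Real.exp (-X) = Q
    rw [hX]
    simp only [Pi.inv_apply, Pi.pow_apply]
    field_simp
    ring
  have hBstep1 : ((1 - ε) * Real.exp X₀ / a ^ 2) * ((X₀ ^ 4 - 2 * X₀ ^ 3) * Real.exp (-X₀))
      = (1 - ε) * (a ^ 2 / t₀ ^ 4 + 2 * a / t₀ ^ 3) := by
    rw [Real.exp_neg]
    generalize hP : Real.exp X₀ = P
    have hPpos : 0 < P := hP ▸ Real.exp_pos _
    rw [hX₀]
    field_simp
    ring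
  have hBstep2 : (1 - ε) * (a ^ 2 / t₀ ^ 4 + 2 * a / t₀ ^ 3)
      = 2 * lam / t₀ + lam ^ 2 / (1 - ε) := by
    rw [ha_def]
    field_simp
    ring
  have hBkey : 2 * lam / t₀ + lam ^ 2 / (1 - ε)
      = ((1 - ε) * Real.exp X₀ / a ^ 2) * ((X₀ ^ 4 - 2 * X₀ ^ 3) * Real.exp (-X₀)) :=
    (hBstep2.symm.trans hBstep1.symm).symm.symm
  have hmono : (X ^ 4 - 2 * X ^ 3) * Real.exp (-X) ≤ (X₀ ^ 4 - 2 * X₀ ^ 3) * Real.exp (-X₀) :=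
    h_anti (Set.mem_Ici.mpr hX₀big.le) (Set.mem_Ici.mpr (le_trans hX₀big.le hXX₀)) hXX₀
  have ha2 : 0 < a ^ 2 := by positivity
  have hCpos : (0:ℝ) < (1 - ε) * Real.exp X₀ / a ^ 2 :=
    div_pos (mul_pos h1ε (Real.exp_pos _)) ha2
  have hmain : deriv (deriv φ) t ≤ 2 * lam / t₀ + lam ^ 2 / (1 - ε) := by
    rw [hkey, hBkey]
    exact mul_le_mul_of_nonneg_left hmono hCpos.le
  have hεφ : ε ≤ φ t := by
    rw [hφ t]
    have hEp := mul_pos h1ε (Real.exp_pos (a * ((t₀ - t)⁻¹ - t₀⁻¹)))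
    linarith
  have hφpos : 0 < φ t := lt_of_lt_of_le hε0 hεφ
  rcases le_or_gt (deriv (deriv φ) t) 0 with hc | hc
  · refine le_trans (min_le_left _ _) ?_
    apply div_nonneg _ hφpos.le
    linarith
  · refine le_trans (min_le_right _ _) ?_
    have hBpos : (0:ℝ) < 2 * lam / t₀ + lam ^ 2 / (1 - ε) := lt_of_lt_of_le hc hmain
    have h1' : deriv (deriv φ) t / φ t ≤ (2 * lam / t₀ + lam ^ 2 / (1 - ε)) / ε :=
      div_le_div₀ hBpos.le hmain hε0 hεφ
    calc -(1 / ε) * (2 * lam / t₀ + lam ^ 2 / (1 - ε))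
        = -((2 * lam / t₀ + lam ^ 2 / (1 - ε)) / ε) := by ring
      _ ≤ -(deriv (deriv φ) t / φ t) := neg_le_neg h1'
      _ = -(deriv (deriv φ) t) / φ t := (neg_div _ _).symm
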